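/- arXiv:1403.7488 — 4 statements merged into one kernel-verified Lean document; each statement's English description precedes it below -/
import Mathlib

section
/- For a finite topological space, the notions of connectedness and path-connectedness agree: a finite topological space is connected if and only if it is path-connected. -/
lemma joined_of_specializes' {X : Type*} [TopologicalSpace X] {x y : X}
    (h : x ⤳ y) : Joined x y := by
  refine ⟨⟨⟨fun t => if t = 1 then y else x, ?_⟩, by norm_num, by simp⟩⟩
  rw [continuous_def]
  intro U hU
  by_cases hy : y ∈ U
  · have hx : x ∈ U := h.mem_open hU hy
    have : (fun t : unitInterval => if t = 1 then y else x) ⁻¹' U = Set.univ := by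
      ext t; simp only [Set.mem_preimage, Set.mem_univ, iff_true]
      split <;> assumption
    rw [this]; exact isOpen_univ
  · by_cases hx : x ∈ U
    · have : (fun t : unitInterval => if t = 1 then y else x) ⁻¹' U = {(1 : unitInterval)}ᶜ := by
        ext t; simp only [Set.mem_preimage, Set.mem_compl_iff, Set.mem_singleton_iff]
        split <;> simp_all
      rw [this]; exact isOpen_compl_singleton
    · have : (fun t : unitInterval => if t = 1 then y else x) ⁻¹' U = ∅ := by
        ext t; simp only [Set.mem_preimage, Set.mem_empty_iff_false, iff_false]
        split <;> assumption
      rw [this]; exact isOpen_empty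

/-- A finite topological space is connected iff it is
path-connected. -/
theorem stmt_9 {X : Type*} [Finite X] [TopologicalSpace X] :
    ConnectedSpace X ↔ PathConnectedSpace X := by
  constructor
  · intro hc
    obtain ⟨x⟩ := hc.toNonempty
    have hopen : IsOpen (pathComponent x) := by
      rw [isOpen_iff_mem_nhds]
      intro y hy
      rw [← nhdsKer_singleton_subset_iff_mem_nhds]
      intro z hz
      obtain ⟨w, hw, hzw⟩ := mem_nhdsKer_iff_specializes.1 hz
      rw [Set.mem_singleton_iff] at hw; subst hw
      exact hy.trans (joined_of_specializes' hzw).symm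
    have hclosed : IsClosed (pathComponent x) := by
      rw [← isOpen_compl_iff, isOpen_iff_mem_nhds]
      intro y hy
      rw [← nhdsKer_singleton_subset_iff_mem_nhds]
      intro z hz hzx
      obtain ⟨w, hw, hzw⟩ := mem_nhdsKer_iff_specializes.1 hz
      rw [Set.mem_singleton_iff] at hw; subst hw
      exact hy (hzx.trans (joined_of_specializes' hzw))
    have huniv : pathComponent x = Set.univ :=
      IsClopen.eq_univ ⟨hclosed, hopen⟩ ⟨x, mem_pathComponent_self x⟩
    refine ⟨⟨x⟩, fun a b => ?_⟩
    exact (show a ∈ pathComponent x from huniv ▸ Set.mem_univ a).symm.trans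
        (show b ∈ pathComponent x from huniv ▸ Set.mem_univ b)
  · intro _; infer_instance
end

section
/- Let X and Y be finite topological spaces and let f, g : X → Y be continuous maps with f ≤ g pointwise (i.e. f(x) ≤ g(x) in the specialization preorder of Y for all x). Then f and g are homotopic. -/
/-- Two continuous maps between finite topological spaces that are
pointwise comparable for the specialization preorder are homotopic. -/
theorem stmt_10 {X Y : Type*} [Finite X] [Finite Y]
    [TopologicalSpace X] [TopologicalSpace Y] (f g : C(X, Y))
    (h : ∀ x : X, ∀ O : Set Y, IsOpen O → f x ∈ O → g x ∈ O) :
    ContinuousMap.Homotopic f g := by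
  refine ⟨⟨⟨fun p => if p.1 = 0 then f p.2 else g p.2, ?_⟩, by simp, by simp⟩⟩
  rw [continuous_def]
  intro O hO
  have : (fun p : unitInterval × X => if p.1 = 0 then f p.2 else g p.2) ⁻¹' O =
      ({t : unitInterval | t ≠ 0} ×ˢ (g ⁻¹' O)) ∪ ((Set.univ : Set unitInterval) ×ˢ (f ⁻¹' O)) := by
    ext ⟨t, x⟩
    by_cases ht : t = 0
    · simp only [ht, Set.mem_preimage, if_pos rfl, Set.mem_union, Set.prodMk_mem_set_prod_eq,
        Set.mem_setOf_eq, ne_eq, not_true_eq_false, false_and, Set.mem_univ, true_and]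
      tauto
    · simp only [Set.mem_preimage, if_neg ht, Set.mem_union, Set.prodMk_mem_set_prod_eq,
        Set.mem_setOf_eq, ne_eq, ht, not_false_eq_true, true_and, Set.mem_univ]
      constructor
      · intro hg; left; exact hg
      · rintro (hg | hf)
        · exact hg
        · exact h x O hO hf
  rw [this]
  exact (isClosed_singleton.isOpen_compl.prod (hO.preimage g.continuous)).union
    (isOpen_univ.prod (hO.preimage f.continuous))
end

section
/- Let X be a finite topological space and x a linear point of X, i.e. there exists y > x such that every z > x satisfies z ≥ y. Then X is homotopy equivalent to X \ {x} (with the subspace topology). -/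
/-- The specialization preorder of a topological space. -/
def specLE {X : Type*} [TopologicalSpace X] (x y : X) : Prop :=
  ∀ O : Set X, IsOpen O → x ∈ O → y ∈ O

/-- Strict specialization order. -/
def specLT {X : Type*} [TopologicalSpace X] (x y : X) : Prop :=
  specLE x y ∧ ¬ specLE y x

/-- In a finite space, up-sets for the specialization preorder are open. -/
lemma upset_isOpen {X : Type*} [Finite X] [TopologicalSpace X] (S : Set X)
    (h : ∀ w ∈ S, ∀ z, specLE w z → z ∈ S) : IsOpen S := by
  have : S = ⋃ w ∈ S, ⋂₀ {O : Set X | IsOpen O ∧ w ∈ O} := by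
    ext z
    constructor
    · intro hz
      exact Set.mem_biUnion hz (fun O hO => hO.2)
    · intro hz
      obtain ⟨w, hw, hzw⟩ := Set.mem_iUnion₂.mp hz
      exact h w hw z (fun O hO hwO => hzw O ⟨hO, hwO⟩)
  rw [this]
  refine isOpen_biUnion fun w _ => ?_
  exact Set.Finite.isOpen_sInter (Set.toFinite _) (fun O hO => hO.1)

/-- Two continuous maps comparable in the specialization preorder are homotopic. -/
lemma homotopic_of_specLE {X Y : Type*} [TopologicalSpace X] [TopologicalSpace Y]
    (f g : C(X, Y)) (h : ∀ w, specLE (f w) (g w)) : f.Homotopic g := by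
  refine ⟨⟨⟨fun p => if p.1 = 0 then f p.2 else g p.2, ?_⟩, ?_, ?_⟩⟩
  · rw [continuous_def]
    intro O hO
    have key : (fun p : unitInterval × X => if p.1 = 0 then f p.2 else g p.2) ⁻¹' O =
        (Set.univ ×ˢ (f ⁻¹' O)) ∪ ({(0 : unitInterval)}ᶜ ×ˢ (g ⁻¹' O)) := by
      ext ⟨t, w⟩
      simp only [Set.mem_preimage, Set.mem_union, Set.mem_prod, Set.mem_univ, true_and,
        Set.mem_compl_iff, Set.mem_singleton_iff]
      by_cases ht : t = 0
      · rw [if_pos ht]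
        constructor
        · intro hf; exact Or.inl hf
        · rintro (hf | ⟨hne, _⟩)
          · exact hf
          · exact absurd ht hne
      · simp only [if_neg ht]
        constructor
        · intro hg; exact Or.inr ⟨ht, hg⟩
        · rintro (hf | ⟨_, hg⟩)
          · exact h w O hO hf
          · exact hg
    rw [key]
    exact (isOpen_univ.prod (hO.preimage f.continuous)).union
      (isOpen_compl_singleton.prod (hO.preimage g.continuous))
  · intro w; simp
  · intro w
    have : (1 : unitInterval) ≠ 0 := by
      intro hc
      have := congrArg Subtype.val hc
      norm_num at this
    simp [this]

/-- Removing a linear point (up beat point) from a finite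
topological space does not change its homotopy type. -/
theorem stmt_12 {X : Type*} [Finite X] [TopologicalSpace X] (x : X)
    (hx : ∃ y : X, specLT x y ∧ ∀ z : X, specLT x z → specLE y z) :
    Nonempty (ContinuousMap.HomotopyEquiv X {z : X // z ≠ x}) := by
  classical
  obtain ⟨y, hy, hymin⟩ := hx
  -- choose a target `t` for the retraction
  obtain ⟨t, ht1, ht2, htK⟩ :
      ∃ t : X, specLE x t ∧ t ≠ x ∧ ∀ z, specLE x z → z = x ∨ specLE t z := by
    by_cases htwin : ∃ z : X, z ≠ x ∧ specLE x z ∧ specLE z x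
    · obtain ⟨z₀, hz₀ne, hz₀1, hz₀2⟩ := htwin
      refine ⟨z₀, hz₀1, hz₀ne, fun z hz => Or.inr ?_⟩
      intro O hO hO'
      exact hz O hO (hz₀2 O hO hO')
    · have hyx : y ≠ x := by
        intro hc
        subst hc
        exact hy.2 hy.1
      refine ⟨y, hy.1, hyx, fun z hz => ?_⟩
      by_cases hzx : z = x
      · exact Or.inl hzx
      · refine Or.inr (hymin z ⟨hz, fun hzle => ?_⟩)
        exact htwin ⟨z, hzx, hz, hzle⟩
  set r₀ : X → X := fun w => if w = x then t else w with hr₀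
  have hne : ∀ w, r₀ w ≠ x := by
    intro w
    by_cases hw : w = x
    · simp [hr₀, hw, ht2]
    · simp [hr₀, hw]
  have hcont : Continuous r₀ := by
    rw [continuous_def]
    intro O hO
    by_cases hT : t ∈ O
    · have key : r₀ ⁻¹' O = O ∪ {x} := by
        ext w
        by_cases hw : w = x
        · simp [hr₀, hw, hT]
        · simp [hr₀, hw]
      rw [key]
      refine upset_isOpen _ ?_
      rintro w (hw | hw) z hz
      · exact Or.inl (hz O hO hw)
      · rcases htK z (by rw [Set.mem_singleton_iff] at hw; rw [hw] at hz; exact hz) with h1 | h2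
        · exact Or.inr h1
        · exact Or.inl (h2 O hO hT)
    · have hxO : x ∉ O := fun hxO => hT (ht1 O hO hxO)
      have key : r₀ ⁻¹' O = O := by
        ext w
        by_cases hw : w = x
        · simp [hr₀, hw, hT, hxO]
        · simp [hr₀, hw]
      rw [key]; exact hO
  let r : C(X, {z : X // z ≠ x}) := ⟨fun w => ⟨r₀ w, hne w⟩, hcont.subtype_mk hne⟩
  let ι : C({z : X // z ≠ x}, X) := ⟨Subtype.val, continuous_subtype_val⟩
  refine ⟨⟨r, ι, ?_, ?_⟩⟩
  · -- ι ∘ r ≃ id on X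
    refine (homotopic_of_specLE (ContinuousMap.id X) (ι.comp r) ?_).symm
    intro w
    by_cases hw : w = x
    · subst hw
      simpa [r, ι, hr₀] using ht1
    · simp [r, ι, hr₀, hw]
      intro O _ hwO; exact hwO
  · -- r ∘ ι = id on X'
    have : r.comp ι = ContinuousMap.id _ := by
      ext ⟨w, hw⟩
      simp [r, ι, hr₀, hw]
    rw [this]
end

section
/- Let X, Y, Z, W be nonempty finite topological spaces on disjoint finite sets whose unions agree: X ⊔ Y = Z ⊔ W as topological spaces, where the join condition holds (every point of X is strictly below every point of Y, and every point of Z strictly below every point of W, in the specialization preorder of the union). If X ∩ Z is a proper nonempty subset of both X and Z, one obtains a contradiction; consequently the decomposition of a finite topological space as a join of join-indecomposable spaces is unique. -/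
/-- if a finite topological space decomposes in two ways as a
join, `X ≻ Y = Z ≻ W`, then the first factors cannot overlap properly: if
`X ∩ Z` is a nonempty proper subset of both `X` and `Z`, we get a
contradiction. (This is the key step for the uniqueness of the decomposition
of a finite space as a join of join-indecomposable spaces.) -/
theorem stmt_16 {E : Type*} [Finite E] [TopologicalSpace E]
    (X Y Z W : Set E)
    (hXY : X ∪ Y = Set.univ) (hdXY : Disjoint X Y)
    (hZW : Z ∪ W = Set.univ) (hdZW : Disjoint Z W)
    (hX : X.Nonempty) (hY : Y.Nonempty) (hZ : Z.Nonempty) (hW : W.Nonempty)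
    (hjoin₁ : ∀ a ∈ X, ∀ b ∈ Y, specLT a b)
    (hjoin₂ : ∀ c ∈ Z, ∀ d ∈ W, specLT c d)
    (hne : (X ∩ Z).Nonempty) (h₁ : X ∩ Z ≠ X) (h₂ : X ∩ Z ≠ Z) :
    False := by
  obtain ⟨x, hxX, hxZ⟩ : ∃ x, x ∈ X ∧ x ∉ Z := by
    by_contra h
    push_neg at h
    exact h₁ (Set.eq_of_subset_of_subset Set.inter_subset_left
      (fun a ha => ⟨ha, h a ha⟩))
  obtain ⟨z, hzZ, hzX⟩ : ∃ z, z ∈ Z ∧ z ∉ X := by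
    by_contra h
    push_neg at h
    exact h₂ (Set.eq_of_subset_of_subset Set.inter_subset_right
      (fun a ha => ⟨h a ha, ha⟩))
  have hxW : x ∈ W := by
    have : x ∈ Z ∪ W := hZW ▸ Set.mem_univ x
    exact this.resolve_left hxZ
  have hzY : z ∈ Y := by
    have : z ∈ X ∪ Y := hXY ▸ Set.mem_univ z
    exact this.resolve_left hzX
  exact (hjoin₁ x hxX z hzY).2 (hjoin₂ z hzZ x hxW).1
end
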